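/- For real numbers n, k, α with 0 < α ≤ 1 and n > k + 1/2 + α (k a nonnegative integer), every u ∈ Hⁿ(ℝ) has its k-th derivative α-Hölder continuous: there is a constant C depending only on n, k, α such that |u^(k)(x) − u^(k)(y)| ≤ C ‖u‖_{Hⁿ} |x−y|^α for all x, y. -/

import Mathlib

open MeasureTheory

/-- The `Hⁿ` norm of a function with Fourier transform `w`:
`‖(1+|ξ|)ⁿ w(ξ)‖_{L²}`. -/
noncomputable def weightedL2Norm (n : ℝ) (w : ℝ → ℂ) : ℝ :=
  (eLpNorm (fun ξ : ℝ => ((1 + |ξ|) ^ n : ℝ) • w ξ) 2 volume).toReal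

open Real Complex FourierTransform Filter

namespace SobolevAux

lemma norm_exp_mul_I_sub_one_le (θ : ℝ) :
    ‖Complex.exp (θ * Complex.I) - 1‖ ≤ min 2 |θ| := by
  refine le_min ?_ ?_
  · calc ‖Complex.exp (θ * Complex.I) - 1‖ ≤ ‖Complex.exp (θ * Complex.I)‖ + ‖(1 : ℂ)‖ :=
        norm_sub_le _ _
    _ = 2 := by
        rw [Complex.norm_exp_ofReal_mul_I]
        norm_num
  · have h1 : ‖Complex.exp (θ * Complex.I) - 1‖
        = Real.sqrt (Complex.normSq (Complex.exp (θ * Complex.I) - 1)) := Complex.norm_def _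
    have hre : (Complex.exp (θ * Complex.I) - 1).re = Real.cos θ - 1 := by
      simp [Complex.exp_ofReal_mul_I_re]
    have him : (Complex.exp (θ * Complex.I) - 1).im = Real.sin θ := by
      simp [Complex.exp_ofReal_mul_I_im]
    have hnsq : Complex.normSq (Complex.exp (θ * Complex.I) - 1) = 2 - 2 * Real.cos θ := by
      rw [Complex.normSq_apply, hre, him]
      have := Real.sin_sq_add_cos_sq θ
      nlinarith
    have hcos : 1 - θ ^ 2 / 2 ≤ Real.cos θ := Real.one_sub_sq_div_two_le_cos
    have hle : Complex.normSq (Complex.exp (θ * Complex.I) - 1) ≤ θ ^ 2 := by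
      rw [hnsq]; nlinarith
    rw [h1, ← Real.sqrt_sq_eq_abs]
    exact Real.sqrt_le_sqrt hle

lemma norm_fourierChar_sub_le (r r' : ℝ) :
    ‖(𝐞 r : ℂ) - (𝐞 r' : ℂ)‖ ≤ min 2 (2 * π * |r - r'|) := by
  have h1 : (𝐞 r : ℂ) = Complex.exp ((2 * π * r : ℝ) * Complex.I) := Real.fourierChar_apply r
  have h2 : (𝐞 r' : ℂ) = Complex.exp ((2 * π * r' : ℝ) * Complex.I) := Real.fourierChar_apply r'
  have key : (𝐞 r : ℂ) - (𝐞 r' : ℂ)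
      = Complex.exp ((2 * π * r' : ℝ) * Complex.I)
        * (Complex.exp ((2 * π * (r - r') : ℝ) * Complex.I) - 1) := by
    rw [h1, h2, mul_sub, mul_one, ← Complex.exp_add]
    congr 2
    push_cast
    ring
  rw [key, norm_mul, Complex.norm_exp_ofReal_mul_I, one_mul]
  have := norm_exp_mul_I_sub_one_le (2 * π * (r - r'))
  have habs : |2 * π * (r - r')| = 2 * π * |r - r'| := by
    rw [abs_mul, _root_.abs_of_nonneg (by positivity : (0:ℝ) ≤ 2 * π)]
  rwa [habs] at this

lemma min_two_le_rpow {α : ℝ} (hα0 : 0 < α) (hα1 : α ≤ 1) {t : ℝ} (ht : 0 ≤ t) :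
    min 2 t ≤ 2 ^ (1 - α) * t ^ α := by
  have h2pow : (0:ℝ) ≤ 2 ^ (1 - α) := Real.rpow_nonneg (by norm_num) _
  rcases le_total t 2 with h | h
  · rcases eq_or_lt_of_le ht with h0 | h0
    · rw [← h0, Real.zero_rpow hα0.ne', mul_zero]
      simpa using min_le_right (2:ℝ) 0
    · have hkey : t ≤ 2 ^ (1 - α) * t ^ α := by
        have heq : t ^ α * t ^ (1 - α) = t := by
          rw [← Real.rpow_add h0]; norm_num
        calc t = t ^ α * t ^ (1 - α) := heq.symm
          _ ≤ t ^ α * 2 ^ (1 - α) :=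
            mul_le_mul_of_nonneg_left
              (Real.rpow_le_rpow h0.le h (by linarith)) (Real.rpow_nonneg ht α)
          _ = 2 ^ (1 - α) * t ^ α := mul_comm _ _
      exact le_trans (min_le_right _ _) hkey
  · calc min 2 t ≤ 2 := min_le_left _ _
      _ = 2 ^ α * 2 ^ (1 - α) := by rw [← Real.rpow_add (by norm_num)]; norm_num
      _ ≤ t ^ α * 2 ^ (1 - α) :=
        mul_le_mul_of_nonneg_right (Real.rpow_le_rpow (by norm_num) h hα0.le) h2pow
      _ = 2 ^ (1 - α) * t ^ α := mul_comm _ _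

/-- Key weighted Cauchy–Schwarz estimate. -/
lemma key_integrable {n : ℝ} (s : ℝ) (hs : s + 1/2 < n) {w : ℝ → ℂ}
    (hw : MemLp (fun ξ : ℝ => ((1 + |ξ|) ^ n : ℝ) • w ξ) 2 volume) :
    Integrable (fun ξ : ℝ => ((1 + |ξ|) ^ s : ℝ) • w ξ) volume ∧
    Integrable (fun ξ : ℝ => (1 + |ξ|) ^ s * ‖w ξ‖) volume ∧
    ∫ ξ : ℝ, (1 + |ξ|) ^ s * ‖w ξ‖ ≤
      (eLpNorm (fun ξ : ℝ => ((1 + |ξ|) ^ (s - n) : ℝ)) 2 volume).toReal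
        * weightedL2Norm n w := by
  have hpos : ∀ ξ : ℝ, (0:ℝ) < 1 + |ξ| := fun ξ => by positivity
  set φ : ℝ → ℝ := fun ξ => (1 + |ξ|) ^ (s - n) with hφ_def
  have hφc : Continuous φ := by
    apply Continuous.rpow_const (by continuity)
    intro ξ; exact Or.inl (ne_of_gt (hpos ξ))
  have hφ2 : MemLp φ 2 volume := by
    rw [memLp_two_iff_integrable_sq hφc.aestronglyMeasurable]
    have : (fun ξ : ℝ => φ ξ ^ 2) = fun ξ : ℝ => (1 + ‖ξ‖) ^ (-(2 * (n - s))) := by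
      funext ξ
      rw [hφ_def]
      rw [← Real.rpow_natCast ((1 + |ξ|) ^ (s - n)) 2, ← Real.rpow_mul (le_of_lt (hpos ξ))]
      norm_num [Real.norm_eq_abs]
      ring_nf
    rw [this]
    apply integrable_one_add_norm (E := ℝ)
    simp only [Module.finrank_self]
    push_cast
    linarith
  set F : ℝ → ℂ := fun ξ => ((1 + |ξ|) ^ n : ℝ) • w ξ with hF_def
  have heq : (fun ξ : ℝ => ((1 + |ξ|) ^ s : ℝ) • w ξ) = φ • F := by
    funext ξ
    show ((1 + |ξ|) ^ s : ℝ) • w ξ = φ ξ • (((1 + |ξ|) ^ n : ℝ) • w ξ)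
    rw [smul_smul, hφ_def, ← Real.rpow_add (hpos ξ)]
    norm_num
  have hmem : MemLp (φ • F) 1 volume := by
    apply MemLp.smul hw hφ2
  have hint : Integrable (fun ξ : ℝ => ((1 + |ξ|) ^ s : ℝ) • w ξ) volume := by
    rw [heq]; exact memLp_one_iff_integrable.1 hmem
  have hnorm_eq : ∀ ξ : ℝ, (1 + |ξ|) ^ s * ‖w ξ‖ = ‖((1 + |ξ|) ^ s : ℝ) • w ξ‖ := fun ξ => by
    rw [norm_smul, Real.norm_eq_abs, abs_of_pos (Real.rpow_pos_of_pos (hpos ξ) s)]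
  refine ⟨hint, hint.norm.congr (Eventually.of_forall fun ξ => (hnorm_eq ξ).symm), ?_⟩
  have h1 : ∫ ξ : ℝ, (1 + |ξ|) ^ s * ‖w ξ‖ = (eLpNorm (φ • F) 1 volume).toReal := by
    rw [← heq]
    rw [eLpNorm_one_eq_lintegral_enorm]
    rw [integral_congr_ae (Eventually.of_forall hnorm_eq)]
    rw [integral_norm_eq_lintegral_enorm hint.1]
  rw [h1]
  have h2 : eLpNorm (φ • F) 1 volume ≤ eLpNorm φ 2 volume * eLpNorm F 2 volume := by
    apply eLpNorm_smul_le_mul_eLpNorm hw.1 hφ2.1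
  have hfin : eLpNorm φ 2 volume * eLpNorm F 2 volume ≠ ⊤ :=
    ENNReal.mul_ne_top hφ2.eLpNorm_ne_top hw.eLpNorm_ne_top
  calc (eLpNorm (φ • F) 1 volume).toReal
      ≤ (eLpNorm φ 2 volume * eLpNorm F 2 volume).toReal := ENNReal.toReal_mono hfin h2
    _ = (eLpNorm φ 2 volume).toReal * (eLpNorm F 2 volume).toReal := ENNReal.toReal_mul
    _ = _ := rfl

end SobolevAux

/-- Hölder embedding of Sobolev spaces: for `0 < α ≤ 1`, `k ∈ ℕ` and `n > k + 1/2 + α`,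
there is a constant `C` depending only on `n, k, α` such that every `u ∈ Hⁿ(ℝ)` has a
representative `v` of class `Cᵏ` whose `k`-th derivative is `α`-Hölder with constant
`C ‖u‖_{Hⁿ}`. -/
theorem sobolev_embedding_holder (n α : ℝ) (k : ℕ) (hα0 : 0 < α) (hα1 : α ≤ 1)
    (hn : (k : ℝ) + 1 / 2 + α < n) :
    ∃ C : ℝ, 0 < C ∧ ∀ u w : ℝ → ℂ,
      u =ᵐ[volume] FourierTransformInv.fourierInv w →
      MemLp (fun ξ : ℝ => ((1 + |ξ|) ^ n : ℝ) • w ξ) 2 volume →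
      ∃ v : ℝ → ℂ, u =ᵐ[volume] v ∧ ContDiff ℝ k v ∧
        ∀ x y : ℝ, ‖iteratedDeriv k v x - iteratedDeriv k v y‖
          ≤ C * weightedL2Norm n w * |x - y| ^ α := by
  classical
  set K : ℝ :=
    (eLpNorm (fun ξ : ℝ => ((1 + |ξ|) ^ ((k : ℝ) + α - n) : ℝ)) 2 volume).toReal with hK_def
  set B : ℝ := 2 ^ (1 - α) * (2 * π) ^ α * (2 * π) ^ k with hB_def
  have hKnonneg : 0 ≤ K := ENNReal.toReal_nonneg
  have hBnonneg : 0 ≤ B := by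
    rw [hB_def]
    have h1 : (0:ℝ) ≤ 2 ^ (1 - α) := Real.rpow_nonneg (by norm_num) _
    have h2 : (0:ℝ) ≤ (2 * π) ^ α := Real.rpow_nonneg (by positivity) _
    positivity
  refine ⟨B * K + 1, by nlinarith, ?_⟩
  intro u w hu hw
  have hpos : ∀ ξ : ℝ, (0:ℝ) < 1 + |ξ| := fun ξ => by positivity
  -- measurability of w
  have hwm : AEStronglyMeasurable w volume := by
    have hweq : w = fun ξ => ((1 + |ξ|) ^ (-n) : ℝ) • (((1 + |ξ|) ^ n : ℝ) • w ξ) := by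
      funext ξ
      rw [smul_smul, ← Real.rpow_add (hpos ξ)]
      norm_num
    rw [hweq]
    exact (Continuous.aestronglyMeasurable (f := fun ξ : ℝ => ((1 + |ξ|) ^ (-n) : ℝ)) (by
      apply Continuous.rpow_const (continuous_const.add _root_.continuous_abs)
      intro ξ; exact Or.inl (ne_of_gt (hpos ξ)))).smul hw.1
  -- integrability of polynomial weights against w
  have hkey : ∀ m : ℕ, m ≤ k →
      Integrable (fun ξ : ℝ => ((1 + |ξ|) ^ (m : ℝ) : ℝ) • w ξ) volume := by
    intro m hm
    have hmn : (m : ℝ) + 1 / 2 < n := by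
      have : (m : ℝ) ≤ (k : ℝ) := Nat.cast_le.2 hm
      linarith
    exact (SobolevAux.key_integrable (m : ℝ) hmn hw).1
  have hnormint : ∀ m : ℕ, m ≤ k →
      Integrable (fun ξ : ℝ => ‖ξ‖ ^ m * ‖w ξ‖) volume := by
    intro m hm
    refine Integrable.mono' (hkey m hm).norm
      (((continuous_norm.pow m).aestronglyMeasurable).mul hwm.norm) ?_
    filter_upwards with ξ
    have e1 : ‖‖ξ‖ ^ m * ‖w ξ‖‖ = ‖ξ‖ ^ m * ‖w ξ‖ := by
      rw [Real.norm_eq_abs]; exact _root_.abs_of_nonneg (by positivity)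
    have e2 : ‖(((1 + |ξ|) ^ (m : ℝ) : ℝ))‖ = (1 + |ξ|) ^ (m : ℝ) := by
      rw [Real.norm_eq_abs]; exact _root_.abs_of_pos (Real.rpow_pos_of_pos (hpos ξ) _)
    rw [e1, norm_smul, e2]
    have h1 : ‖ξ‖ ^ m ≤ (1 + |ξ|) ^ (m : ℝ) := by
      rw [Real.norm_eq_abs, ← Real.rpow_natCast |ξ| m]
      exact Real.rpow_le_rpow (abs_nonneg ξ) (by linarith) (Nat.cast_nonneg m)
    exact mul_le_mul_of_nonneg_right h1 (norm_nonneg _)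
  have hxint : ∀ m : ℕ, m ≤ k →
      Integrable (fun ξ : ℝ => (ξ ^ m : ℝ) • w ξ) volume := by
    intro m hm
    refine Integrable.mono' (hnormint m hm)
      (((continuous_pow m).aestronglyMeasurable).smul hwm) ?_
    filter_upwards with ξ
    rw [norm_smul]
    simp [Real.norm_eq_abs, _root_.abs_pow]
  -- smoothness of the Fourier transform
  have hFT : ContDiff ℝ (k : ℕ∞) (𝓕 w) :=
    Real.contDiff_fourier (fun m hm => hnormint m (by exact_mod_cast hm))
  set g : ℝ → ℂ := fun ξ : ℝ => (-2 * π * Complex.I * ξ) ^ k • w ξ with hg_def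
  have hD : iteratedDeriv k (𝓕 w) = 𝓕 g :=
    Real.iteratedDeriv_fourier (N := (k : ℕ∞))
      (fun m hm => hxint m (by exact_mod_cast hm)) le_rfl
  have hg_int : Integrable g volume := by
    have heqg : g = fun ξ : ℝ => ((-2 * π * Complex.I) ^ k : ℂ) • ((ξ ^ k : ℝ) • w ξ) := by
      funext ξ
      simp only [hg_def, smul_eq_mul, Complex.real_smul]
      push_cast
      ring_nf
    rw [heqg]
    exact ((hxint k le_rfl).smul ((-2 * (π:ℂ) * Complex.I) ^ k)).congr
      (Filter.Eventually.of_forall fun ξ => rfl)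
  -- the weighted L² data
  set W : ℝ := weightedL2Norm n w with hW_def
  have hWnonneg : 0 ≤ W := ENNReal.toReal_nonneg
  have hsn : (k : ℝ) + α + 1 / 2 < n := by linarith
  obtain ⟨-, hwt_int, hwt_bound⟩ := SobolevAux.key_integrable ((k : ℝ) + α) hsn hw
  -- the main Hölder estimate for the Fourier transform of g
  have main : ∀ a b : ℝ, ‖𝓕 g a - 𝓕 g b‖
      ≤ B * K * W * |a - b| ^ α := by
    intro a b
    have hI1 := (Real.fourierIntegral_convergent_iff (f := g) (μ := volume) a).2 hg_int
    have hI2 := (Real.fourierIntegral_convergent_iff (f := g) (μ := volume) b).2 hg_int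
    have hsub : 𝓕 g a - 𝓕 g b
        = ∫ ξ : ℝ, (((𝐞 (-(inner ℝ ξ a : ℝ)) : Circle) : ℂ)
            - ((𝐞 (-(inner ℝ ξ b : ℝ)) : Circle) : ℂ)) * g ξ := by
      rw [Real.fourier_eq, Real.fourier_eq, ← integral_sub hI1 hI2]
      congr 1
      funext ξ
      simp [Circle.smul_def, sub_mul]
    set Bc : ℝ := 2 ^ (1 - α) * (2 * π) ^ α * |a - b| ^ α * (2 * π) ^ k with hBc_def
    have hBc_nonneg : 0 ≤ Bc := by
      have h1 : (0:ℝ) ≤ 2 ^ (1 - α) := Real.rpow_nonneg (by norm_num) _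
      have h2 : (0:ℝ) ≤ (2 * π) ^ α := Real.rpow_nonneg (by positivity) _
      have h3 : (0:ℝ) ≤ |a - b| ^ α := Real.rpow_nonneg (abs_nonneg _) _
      positivity
    have hh_int : Integrable
        (fun ξ : ℝ => Bc * ((1 + |ξ|) ^ ((k : ℝ) + α) * ‖w ξ‖)) volume :=
      hwt_int.const_mul Bc
    rw [hsub]
    have hbound : ∀ ξ : ℝ, ‖(((𝐞 (-(inner ℝ ξ a : ℝ)) : Circle) : ℂ)
        - ((𝐞 (-(inner ℝ ξ b : ℝ)) : Circle) : ℂ)) * g ξ‖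
        ≤ Bc * ((1 + |ξ|) ^ ((k : ℝ) + α) * ‖w ξ‖) := by
      intro ξ
      rw [norm_mul]
      have hinner1 : (inner ℝ ξ a : ℝ) = ξ * a := by simp [RCLike.inner_apply, mul_comm]
      have hinner2 : (inner ℝ ξ b : ℝ) = ξ * b := by simp [RCLike.inner_apply, mul_comm]
      have hechar : ‖((𝐞 (-(inner ℝ ξ a : ℝ)) : Circle) : ℂ)
          - ((𝐞 (-(inner ℝ ξ b : ℝ)) : Circle) : ℂ)‖ ≤ min 2 (2 * π * (|ξ| * |a - b|)) := by
        have := SobolevAux.norm_fourierChar_sub_le (-(inner ℝ ξ a : ℝ)) (-(inner ℝ ξ b : ℝ))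
        have habs : |(-(inner ℝ ξ a : ℝ)) - (-(inner ℝ ξ b : ℝ))| = |ξ| * |a - b| := by
          rw [hinner1, hinner2]
          rw [show -(ξ * a) - -(ξ * b) = ξ * (b - a) by ring, abs_mul, abs_sub_comm]
        rwa [habs] at this
      have hgnorm : ‖g ξ‖ = (2 * π) ^ k * |ξ| ^ k * ‖w ξ‖ := by
        simp only [hg_def]
        rw [norm_smul, norm_pow]
        congr 2
        rw [show ((-2 : ℂ) * π * Complex.I * ξ) = ((-2 * π : ℝ) : ℂ) * Complex.I * (ξ : ℂ) by
          push_cast; ring]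
        simp only [norm_mul, Complex.norm_real, Complex.norm_I,
          Real.norm_eq_abs]
        rw [abs_neg, abs_two, _root_.abs_of_pos Real.pi_pos]
        ring
      have hmin : min 2 (2 * π * (|ξ| * |a - b|))
          ≤ 2 ^ (1 - α) * ((2 * π) ^ α * (|ξ| ^ α * |a - b| ^ α)) := by
        have := SobolevAux.min_two_le_rpow hα0 hα1
          (t := 2 * π * (|ξ| * |a - b|)) (by positivity)
        rwa [Real.mul_rpow (by positivity) (by positivity),
          Real.mul_rpow (abs_nonneg _) (abs_nonneg _)] at this
      have hxi : |ξ| ^ α * |ξ| ^ k ≤ (1 + |ξ|) ^ ((k : ℝ) + α) := by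
        have h1 : |ξ| ^ α ≤ (1 + |ξ|) ^ α :=
          Real.rpow_le_rpow (abs_nonneg _) (by linarith) hα0.le
        have h2 : |ξ| ^ k ≤ (1 + |ξ|) ^ k := pow_le_pow_left₀ (abs_nonneg _) (by linarith) k
        calc |ξ| ^ α * |ξ| ^ k ≤ (1 + |ξ|) ^ α * (1 + |ξ|) ^ k :=
              mul_le_mul h1 h2 (by positivity) (by positivity)
          _ = (1 + |ξ|) ^ ((k : ℝ) + α) := by
              rw [← Real.rpow_natCast (1 + |ξ|) k, ← Real.rpow_add (hpos ξ)]
              ring_nf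
      calc ‖((𝐞 (-(inner ℝ ξ a : ℝ)) : Circle) : ℂ)
          - ((𝐞 (-(inner ℝ ξ b : ℝ)) : Circle) : ℂ)‖ * ‖g ξ‖
          ≤ (2 ^ (1 - α) * ((2 * π) ^ α * (|ξ| ^ α * |a - b| ^ α)))
            * ((2 * π) ^ k * |ξ| ^ k * ‖w ξ‖) := by
            rw [hgnorm]
            have hr : (0:ℝ) ≤ 2 ^ (1 - α) * ((2 * π) ^ α * (|ξ| ^ α * |a - b| ^ α)) := by
              have h1 : (0:ℝ) ≤ 2 ^ (1 - α) := Real.rpow_nonneg (by norm_num) _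
              have h2 : (0:ℝ) ≤ (2 * π) ^ α := Real.rpow_nonneg (by positivity) _
              have h3 : (0:ℝ) ≤ |ξ| ^ α := Real.rpow_nonneg (abs_nonneg _) _
              have h4 : (0:ℝ) ≤ |a - b| ^ α := Real.rpow_nonneg (abs_nonneg _) _
              positivity
            exact mul_le_mul (hechar.trans hmin) le_rfl (by positivity) hr
        _ = Bc * ((|ξ| ^ α * |ξ| ^ k) * ‖w ξ‖) := by rw [hBc_def]; ring
        _ ≤ Bc * ((1 + |ξ|) ^ ((k : ℝ) + α) * ‖w ξ‖) := by
            apply mul_le_mul_of_nonneg_left _ hBc_nonneg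
            exact mul_le_mul_of_nonneg_right hxi (norm_nonneg _)
    calc ‖(∫ ξ : ℝ, (((𝐞 (-(inner ℝ ξ a : ℝ)) : Circle) : ℂ)
          - ((𝐞 (-(inner ℝ ξ b : ℝ)) : Circle) : ℂ)) * g ξ)‖
        ≤ ∫ ξ : ℝ, Bc * ((1 + |ξ|) ^ ((k : ℝ) + α) * ‖w ξ‖) :=
          norm_integral_le_of_norm_le hh_int (Eventually.of_forall hbound)
      _ = Bc * ∫ ξ : ℝ, (1 + |ξ|) ^ ((k : ℝ) + α) * ‖w ξ‖ := integral_const_mul Bc _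
      _ ≤ Bc * (K * W) := by
          apply mul_le_mul_of_nonneg_left _ hBc_nonneg
          simpa [hK_def, hW_def, show (k : ℝ) + α - n = (k : ℝ) + α - n from rfl] using hwt_bound
      _ = B * K * W * |a - b| ^ α := by rw [hBc_def, hB_def]; ring
  -- assemble: the representative
  refine ⟨fun x => 𝓕 w (-x), ?_, ?_, ?_⟩
  · have hveq : FourierTransformInv.fourierInv w = fun x => 𝓕 w (-x) :=
      funext fun x => Real.fourierInv_eq_fourier_neg w x
    rw [← hveq]
    exact hu
  · exact hFT.comp contDiff_neg
  · intro x y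
    have hx := iteratedDeriv_comp_neg k (𝓕 w) x
    have hy := iteratedDeriv_comp_neg k (𝓕 w) y
    rw [hx, hy, ← smul_sub, norm_smul, Real.norm_eq_abs, _root_.abs_pow, abs_neg, abs_one,
      one_pow, one_mul, hD]
    have hxy : |(-x) - (-y)| = |x - y| := by rw [show -x - -y = y - x by ring, abs_sub_comm]
    calc ‖𝓕 g (-x) - 𝓕 g (-y)‖
        ≤ B * K * W * |(-x) - (-y)| ^ α := main (-x) (-y)
      _ = B * K * W * |x - y| ^ α := by rw [hxy]
      _ ≤ (B * K + 1) * W * |x - y| ^ α := by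
          have h1 : (0:ℝ) ≤ |x - y| ^ α := Real.rpow_nonneg (abs_nonneg _) _
          nlinarith
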